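/- Let A = k⟨u,v⟩/(vu+uv) be the (-1)-quantum plane, and let α = -I₂ act on A by negating both u and v. Then the invariant ring A^⟨α⟩ is generated by u², v², and uv, and is a commutative ring isomorphic to k[x,y,z]/(xy + z²). -/

import Mathlib

/-- The defining relation of the `(-1)`-quantum plane: `v * u = -(u * v)`. -/
inductive NegQRel (K : Type*) [Field K] :
    FreeAlgebra K (Fin 2) → FreeAlgebra K (Fin 2) → Prop
  | rel : NegQRel K (FreeAlgebra.ι K 1 * FreeAlgebra.ι K 0)
      (-(FreeAlgebra.ι K 0 * FreeAlgebra.ι K 1))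

/-- The `(-1)`-quantum plane `k_{-1}[u,v] = k⟨u,v⟩/(vu + uv)`. -/
abbrev NegQPlane (K : Type*) [Field K] := RingQuot (NegQRel K)

/-- The generator `u` of the `(-1)`-quantum plane. -/
noncomputable def NegQPlane.u (K : Type*) [Field K] : NegQPlane K :=
  RingQuot.mkAlgHom K (NegQRel K) (FreeAlgebra.ι K 0)

/-- The generator `v` of the `(-1)`-quantum plane. -/
noncomputable def NegQPlane.v (K : Type*) [Field K] : NegQPlane K :=
  RingQuot.mkAlgHom K (NegQRel K) (FreeAlgebra.ι K 1)

namespace NQP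
variable (K : Type*) [Field K]

local notation "u" => NegQPlane.u K
local notation "v" => NegQPlane.v K

lemma vu : v * u = -(u * v) := by
  have := RingQuot.mkAlgHom_rel K (NegQRel.rel (K := K))
  simpa [NegQPlane.u, NegQPlane.v, map_mul, map_neg] using this

lemma vu_smul : v * u = ((-1 : K)) • (u * v) :=
  (vu K).trans (neg_one_smul K _).symm

lemma v_mul_u_pow (n : ℕ) : v * u ^ n = ((-1 : K) ^ n) • (u ^ n * v) := by
  induction n with
  | zero => simp
  | succ n ih =>
    rw [pow_succ, ← mul_assoc, ih, smul_mul_assoc, mul_assoc, vu_smul K,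
      mul_smul_comm, smul_smul, ← mul_assoc, ← pow_succ, ← pow_succ]

lemma v_pow_mul_u_pow (m n : ℕ) :
    v ^ m * u ^ n = ((-1 : K) ^ (m * n)) • (u ^ n * v ^ m) := by
  induction m with
  | zero => simp
  | succ m ih =>
    rw [pow_succ, mul_assoc, v_mul_u_pow K n, mul_smul_comm, ← mul_assoc, ih,
      smul_mul_assoc, smul_smul, ← pow_add, mul_assoc, ← pow_succ]
    ring_nf

lemma mono_mul (i j k l : ℕ) :
    (u ^ i * v ^ j) * (u ^ k * v ^ l)
      = ((-1 : K) ^ (j * k)) • (u ^ (i + k) * v ^ (j + l)) := by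
  rw [mul_assoc, ← mul_assoc (v ^ j), v_pow_mul_u_pow K j k, smul_mul_assoc,
    mul_smul_comm, mul_assoc, ← pow_add, ← mul_assoc, ← pow_add]

end NQP

namespace NQP
variable (K : Type*) [Field K]
local notation "u" => NegQPlane.u K
local notation "v" => NegQPlane.v K

lemma adjoin_uv : Algebra.adjoin K ({u, v} : Set (NegQPlane K)) = ⊤ := by
  have h := congrArg (Subalgebra.map (RingQuot.mkAlgHom K (NegQRel K)))
    (FreeAlgebra.adjoin_range_ι (R := K) (X := Fin 2))
  rw [AlgHom.map_adjoin, Algebra.map_top,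
    (AlgHom.range_eq_top _).mpr (RingQuot.mkAlgHom_surjective K (NegQRel K))] at h
  rw [← h]
  congr 1
  rw [← Set.range_comp]
  ext x
  simp only [Set.mem_range, Function.comp_apply, Set.mem_insert_iff, Set.mem_singleton_iff,
    Fin.exists_fin_two, NegQPlane.u, NegQPlane.v, eq_comm]

noncomputable def Smon : Submodule K (NegQPlane K) :=
  Submodule.span K (Set.range fun p : ℕ × ℕ => u ^ p.1 * v ^ p.2)

lemma mono_mem (i j : ℕ) : u ^ i * v ^ j ∈ Smon K :=
  Submodule.subset_span ⟨(i, j), rfl⟩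

lemma one_mem_Smon : (1 : NegQPlane K) ∈ Smon K := by
  simpa using mono_mem K 0 0

lemma Smon_mul {x y : NegQPlane K} (hx : x ∈ Smon K) (hy : y ∈ Smon K) :
    x * y ∈ Smon K := by
  have hle : Smon K * Smon K ≤ Smon K := by
    rw [Smon, Submodule.span_mul_span]
    apply Submodule.span_le.mpr
    rintro z ⟨x, ⟨p, rfl⟩, y, ⟨q, rfl⟩, rfl⟩
    simp only []
    rw [mono_mul]
    exact Submodule.smul_mem _ _ (mono_mem K _ _)
  exact hle (Submodule.mul_mem_mul hx hy)

lemma mem_Smon (x : NegQPlane K) : x ∈ Smon K := by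
  have hsub : Algebra.adjoin K ({u, v} : Set (NegQPlane K)) ≤
      (Smon K).toSubalgebra (one_mem_Smon K) (fun _ _ => Smon_mul K) := by
    apply Algebra.adjoin_le
    rintro y (rfl | rfl)
    · simpa using mono_mem K 1 0
    · simpa using mono_mem K 0 1
  rw [adjoin_uv] at hsub
  exact hsub (Algebra.mem_top)

end NQP

namespace NQP
variable (K : Type*) [Field K]
local notation "u" => NegQPlane.u K
local notation "v" => NegQPlane.v K

lemma commute_u2_v2 : Commute (u ^ 2) (v ^ 2) := by
  have h := v_pow_mul_u_pow K 2 2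
  norm_num at h
  simpa [Commute, SemiconjBy] using h.symm

lemma commute_u2_v : Commute (u ^ 2) v := by
  have h := v_mul_u_pow K 2
  norm_num at h
  simpa [Commute, SemiconjBy] using h.symm

lemma commute_v2_u : Commute (v ^ 2) u := by
  have h := v_pow_mul_u_pow K 2 1
  norm_num at h
  simpa [Commute, SemiconjBy] using h

lemma commute_u2_uv : Commute (u ^ 2) (u * v) :=
  Commute.mul_right ((Commute.refl u).pow_left 2) (commute_u2_v K)

lemma commute_v2_uv : Commute (v ^ 2) (u * v) :=
  Commute.mul_right (commute_v2_u K) ((Commute.refl v).pow_left 2)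

lemma gens_commute : ∀ a ∈ ({u ^ 2, v ^ 2, u * v} : Set (NegQPlane K)),
    ∀ b ∈ ({u ^ 2, v ^ 2, u * v} : Set (NegQPlane K)), Commute a b := by
  rintro a (rfl | rfl | rfl) b (rfl | rfl | rfl)
  exacts [Commute.refl _, commute_u2_v2 K, commute_u2_uv K,
    (commute_u2_v2 K).symm, Commute.refl _, commute_v2_uv K,
    (commute_u2_uv K).symm, (commute_v2_uv K).symm, Commute.refl _]

lemma comm_adjoin {x y : NegQPlane K}
    (hx : x ∈ Algebra.adjoin K ({u ^ 2, v ^ 2, u * v} : Set (NegQPlane K)))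
    (hy : y ∈ Algebra.adjoin K ({u ^ 2, v ^ 2, u * v} : Set (NegQPlane K))) :
    Commute x y :=
  Algebra.commute_of_mem_adjoin_of_forall_mem_commute hy (fun b hb =>
    (Algebra.commute_of_mem_adjoin_of_forall_mem_commute hx
      (fun a ha => gens_commute K b hb a ha)).symm)

lemma mono_mem_adjoin (i j : ℕ) (h : Even (i + j)) :
    u ^ i * v ^ j ∈ Algebra.adjoin K ({u ^ 2, v ^ 2, u * v} : Set (NegQPlane K)) := by
  have hu2 : u ^ 2 ∈ Algebra.adjoin K ({u ^ 2, v ^ 2, u * v} : Set (NegQPlane K)) :=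
    Algebra.subset_adjoin (by simp)
  have hv2 : v ^ 2 ∈ Algebra.adjoin K ({u ^ 2, v ^ 2, u * v} : Set (NegQPlane K)) :=
    Algebra.subset_adjoin (by simp)
  have huv : u * v ∈ Algebra.adjoin K ({u ^ 2, v ^ 2, u * v} : Set (NegQPlane K)) :=
    Algebra.subset_adjoin (by simp)
  have hiff := (Nat.even_add).mp h
  rcases Nat.even_or_odd i with hi | hi
  · obtain ⟨a, ha⟩ := hi
    obtain ⟨b, hb⟩ := hiff.mp ⟨a, ha⟩
    have : u ^ i * v ^ j = (u ^ 2) ^ a * (v ^ 2) ^ b := by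
      rw [← pow_mul, ← pow_mul, ha, hb, two_mul, two_mul]
    rw [this]
    exact mul_mem (pow_mem hu2 a) (pow_mem hv2 b)
  · obtain ⟨a, ha⟩ := hi
    have hj : Odd j := by
      rcases Nat.even_or_odd j with hj | hj
      · exact absurd (hiff.mpr hj) (by simp [Nat.odd_iff.mp ⟨a, ha⟩, Nat.even_iff])
      · exact hj
    obtain ⟨b, hb⟩ := hj
    have : u ^ i * v ^ j = (u ^ 2) ^ a * ((u * v) * (v ^ 2) ^ b) := by
      rw [← pow_mul, ← pow_mul, ha, hb, pow_succ, pow_succ']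
      rw [mul_assoc, ← mul_assoc u v _, ← mul_assoc (u ^ (2 * a)) _ _]
    rw [this]
    exact mul_mem (pow_mem hu2 a) (mul_mem huv (pow_mem hv2 b))

end NQP

namespace NQP
variable (K : Type*) [Field K]
local notation "u" => NegQPlane.u K
local notation "v" => NegQPlane.v K
local notation "B" => Algebra.adjoin K ({NegQPlane.u K ^ 2, NegQPlane.v K ^ 2,
  NegQPlane.u K * NegQPlane.v K} : Set (NegQPlane K))

lemma alpha_mono (α : NegQPlane K ≃ₐ[K] NegQPlane K) (hαu : α u = -u) (hαv : α v = -v)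
    (i j : ℕ) : α (u ^ i * v ^ j) = ((-1 : K) ^ (i + j)) • (u ^ i * v ^ j) := by
  have hu : α u = ((-1 : K)) • u := hαu.trans (neg_one_smul K u).symm
  have hv : α v = ((-1 : K)) • v := hαv.trans (neg_one_smul K v).symm
  rw [map_mul, map_pow, map_pow, hu, hv, smul_pow, smul_pow, smul_mul_smul_comm, ← pow_add]

lemma half_mem [CharZero K] (α : NegQPlane K ≃ₐ[K] NegQPlane K) (hαu : α u = -u) (hαv : α v = -v)
    (x : NegQPlane K) : (2⁻¹ : K) • (x + α x) ∈ B := by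
  induction mem_Smon K x using Submodule.span_induction with
  | mem x hx =>
    obtain ⟨⟨i, j⟩, rfl⟩ := hx
    simp only []
    rw [alpha_mono K α hαu hαv]
    rcases Nat.even_or_odd (i + j) with hij | hij
    · rw [hij.neg_one_pow, one_smul, ← two_smul K, smul_smul,
        show ((2:K)⁻¹ * 2) = 1 by norm_num, one_smul]
      exact mono_mem_adjoin K i j hij
    · have h0 : (u ^ i * v ^ j) + ((-1 : K) ^ (i + j)) • (u ^ i * v ^ j) = 0 := by
        rw [hij.neg_one_pow]; module
      rw [h0, smul_zero]
      exact zero_mem _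
  | zero => simpa using zero_mem _
  | add x y hx hy ihx ihy =>
    rw [map_add, add_add_add_comm, smul_add]
    exact add_mem ihx ihy
  | smul r x hx ih =>
    rw [map_smul, ← smul_add, smul_comm]
    exact Subalgebra.smul_mem _ ih r

lemma equalizer_eq [CharZero K] (α : NegQPlane K ≃ₐ[K] NegQPlane K) (hαu : α u = -u) (hαv : α v = -v) :
    AlgHom.equalizer α.toAlgHom (AlgHom.id K (NegQPlane K)) = B := by
  apply le_antisymm
  · intro x hx
    have hfix : α x = x := hx
    have := half_mem K α hαu hαv x
    rwa [hfix, ← two_smul K, smul_smul, inv_mul_cancel₀ (two_ne_zero), one_smul] at this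
  · apply Algebra.adjoin_le
    rintro y (rfl | rfl | rfl)
    · simp only [SetLike.mem_coe, AlgHom.mem_equalizer]
      simp only [AlgEquiv.toAlgHom_eq_coe, AlgHom.coe_coe, AlgHom.coe_id, id_eq, map_pow, hαu]
      exact (congrArg (· ^ 2) hαu).trans (neg_sq (NegQPlane.u K))
    · simp only [SetLike.mem_coe, AlgHom.mem_equalizer]
      simp only [AlgEquiv.toAlgHom_eq_coe, AlgHom.coe_coe, AlgHom.coe_id, id_eq, map_pow, hαv]
      exact (congrArg (· ^ 2) hαv).trans (neg_sq (NegQPlane.v K))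
    · simp only [SetLike.mem_coe, AlgHom.mem_equalizer]
      simp only [AlgEquiv.toAlgHom_eq_coe, AlgHom.coe_coe, AlgHom.coe_id, id_eq, map_mul,
        hαu, hαv]
      exact (congrArg₂ (· * ·) hαu hαv).trans (neg_mul_neg (NegQPlane.u K) (NegQPlane.v K))

end NQP

namespace NQP
open MvPolynomial
variable (K : Type*) [Field K]
local notation "u" => NegQPlane.u K
local notation "v" => NegQPlane.v K

noncomputable def U : Matrix (Fin 4) (Fin 4) (MvPolynomial (Fin 2) K) :=
  !![0,0,1,0; 0,0,0,1; X 0,0,0,0; 0,X 0,0,0]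

noncomputable def V : Matrix (Fin 4) (Fin 4) (MvPolynomial (Fin 2) K) :=
  !![0,1,0,0; X 1,0,0,0; 0,0,0,-1; 0,0,-X 1,0]

lemma hVU : V K * U K = -(U K * V K) := by
  refine Matrix.ext fun i j => ?_
  fin_cases i <;> fin_cases j <;>
    simp [U, V, Matrix.mul_apply, Fin.sum_univ_four, Matrix.neg_apply,
      Matrix.vecHead, Matrix.vecTail] <;> ring

lemma hU2 : U K * U K = algebraMap (MvPolynomial (Fin 2) K) _ (X 0) := by
  refine Matrix.ext fun i j => ?_
  fin_cases i <;> fin_cases j <;>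
    simp [U, Matrix.mul_apply, Fin.sum_univ_four, Matrix.algebraMap_matrix_apply,
      Matrix.vecHead, Matrix.vecTail]

lemma hV2 : V K * V K = algebraMap (MvPolynomial (Fin 2) K) _ (X 1) := by
  refine Matrix.ext fun i j => ?_
  fin_cases i <;> fin_cases j <;>
    simp [V, Matrix.mul_apply, Fin.sum_univ_four, Matrix.algebraMap_matrix_apply,
      Matrix.vecHead, Matrix.vecTail]

lemma hUV2 : (U K * V K) * (U K * V K)
    = -(algebraMap (MvPolynomial (Fin 2) K) _ (X 0 * X 1)) := by
  refine Matrix.ext fun i j => ?_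
  fin_cases i <;> fin_cases j <;>
    simp [U, V, Matrix.mul_apply, Fin.sum_univ_four, Matrix.algebraMap_matrix_apply,
      Matrix.neg_apply, Matrix.vecHead, Matrix.vecTail] <;> ring

lemma extract (a b : MvPolynomial (Fin 2) K)
    (h : algebraMap (MvPolynomial (Fin 2) K) (Matrix (Fin 4) (Fin 4) (MvPolynomial (Fin 2) K)) a
      + algebraMap (MvPolynomial (Fin 2) K) _ b * (U K * V K) = 0) : a = 0 ∧ b = 0 := by
  constructor
  · have h00 := congrFun (congrFun (congrArg (fun m => (m : Matrix (Fin 4) (Fin 4) _)) h) 0) 0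
    simpa [U, V, Matrix.mul_apply, Fin.sum_univ_four, Matrix.algebraMap_matrix_apply]
      using h00
  · have h03 := congrFun (congrFun (congrArg (fun m => (m : Matrix (Fin 4) (Fin 4) _)) h) 0) 3
    simpa [U, V, Matrix.mul_apply, Fin.sum_univ_four, Matrix.algebraMap_matrix_apply]
      using h03

end NQP

namespace NQP
open MvPolynomial
variable (K : Type*) [Field K]
local notation "u" => NegQPlane.u K
local notation "v" => NegQPlane.v K

noncomputable def σ : NegQPlane K →ₐ[K] Matrix (Fin 4) (Fin 4) (MvPolynomial (Fin 2) K) :=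
  RingQuot.liftAlgHom K ⟨FreeAlgebra.lift K ![U K, V K], by
    rintro _ _ ⟨⟩
    simp only [map_mul, map_neg, FreeAlgebra.lift_ι_apply, Matrix.cons_val_zero,
      Matrix.cons_val_one, Matrix.head_cons]
    exact hVU K⟩

lemma σ_u : σ K u = U K := by
  rw [NegQPlane.u, σ, RingQuot.liftAlgHom_mkAlgHom_apply]
  simp [FreeAlgebra.lift_ι_apply]

lemma σ_v : σ K v = V K := by
  rw [NegQPlane.v, σ, RingQuot.liftAlgHom_mkAlgHom_apply]
  simp [FreeAlgebra.lift_ι_apply]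

@[reducible]
noncomputable def Binst : CommRing (Algebra.adjoin K ({NegQPlane.u K ^ 2, NegQPlane.v K ^ 2,
    NegQPlane.u K * NegQPlane.v K} : Set (NegQPlane K))) :=
  { (inferInstance : Ring (Algebra.adjoin K ({NegQPlane.u K ^ 2, NegQPlane.v K ^ 2,
      NegQPlane.u K * NegQPlane.v K} : Set (NegQPlane K)))) with
    mul_comm := fun x y => Subtype.ext (comm_adjoin K x.2 y.2) }

noncomputable def φb : MvPolynomial (Fin 3) K →ₐ[K] (Algebra.adjoin K ({NegQPlane.u K ^ 2,
    NegQPlane.v K ^ 2, NegQPlane.u K * NegQPlane.v K} : Set (NegQPlane K))) :=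
  letI := Binst K
  aeval ![⟨u ^ 2, Algebra.subset_adjoin (by simp)⟩, ⟨v ^ 2, Algebra.subset_adjoin (by simp)⟩,
    ⟨u * v, Algebra.subset_adjoin (by simp)⟩]

noncomputable def φ : MvPolynomial (Fin 3) K →ₐ[K] NegQPlane K :=
  (Algebra.adjoin K ({NegQPlane.u K ^ 2, NegQPlane.v K ^ 2,
    NegQPlane.u K * NegQPlane.v K} : Set (NegQPlane K))).val.comp (φb K)

lemma φ_X0 : φ K (X 0) = u ^ 2 := by simp [φ, φb]
lemma φ_X1 : φ K (X 1) = v ^ 2 := by simp [φ, φb]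
lemma φ_X2 : φ K (X 2) = u * v := by simp [φ, φb]

noncomputable def ψ : MvPolynomial (Fin 3) K →ₐ[K] Matrix (Fin 4) (Fin 4) (MvPolynomial (Fin 2) K) :=
  (σ K).comp (φ K)

lemma ψ_X0 : ψ K (X 0) = algebraMap (MvPolynomial (Fin 2) K) _ (X 0) := by
  rw [ψ, AlgHom.comp_apply, φ_X0, map_pow, σ_u, pow_two, hU2]

lemma ψ_X1 : ψ K (X 1) = algebraMap (MvPolynomial (Fin 2) K) _ (X 1) := by
  rw [ψ, AlgHom.comp_apply, φ_X1, map_pow, σ_v, pow_two, hV2]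

lemma ψ_X2 : ψ K (X 2) = U K * V K := by
  rw [ψ, AlgHom.comp_apply, φ_X2, map_mul, σ_u, σ_v]

noncomputable def T : MvPolynomial (Fin 2) K →ₐ[K] MvPolynomial (Fin 3) K :=
  rename (fun i => i.castSucc)

lemma T_X0 : T K (X 0) = X 0 := by simp [T]
lemma T_X1 : T K (X 1) = X 1 := by simp [T]

lemma ψ_T (a : MvPolynomial (Fin 2) K) :
    ψ K (T K a) = algebraMap (MvPolynomial (Fin 2) K) _ a := by
  have : (ψ K).comp (T K) = IsScalarTower.toAlgHom K (MvPolynomial (Fin 2) K)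
      (Matrix (Fin 4) (Fin 4) (MvPolynomial (Fin 2) K)) := by
    apply MvPolynomial.algHom_ext
    intro i
    fin_cases i
    · simp [AlgHom.comp_apply, T_X0, ψ_X0]
    · simp [AlgHom.comp_apply, T_X1, ψ_X1]
  have h2 := DFunLike.congr_fun this a
  simpa using h2

end NQP

namespace NQP
open MvPolynomial
variable (K : Type*) [Field K]
local notation "u" => NegQPlane.u K
local notation "v" => NegQPlane.v K

lemma normal_form (q : MvPolynomial (Fin 3) K) :
    ∃ a b : MvPolynomial (Fin 2) K,
      q - (T K a + T K b * X 2) ∈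
        Ideal.span {(X 0 * X 1 + X 2 ^ 2 : MvPolynomial (Fin 3) K)} := by
  induction q using MvPolynomial.induction_on with
  | C c => exact ⟨C c, 0, by simp [T]⟩
  | add p q hp hq =>
    obtain ⟨a, b, h⟩ := hp
    obtain ⟨a', b', h'⟩ := hq
    refine ⟨a + a', b + b', ?_⟩
    have e : p + q - (T K (a + a') + T K (b + b') * X 2)
        = (p - (T K a + T K b * X 2)) + (q - (T K a' + T K b' * X 2)) := by
      simp only [map_add]; ring
    rw [e]; exact add_mem h h'
  | mul_X p n hp =>
    obtain ⟨a, b, h⟩ := hp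
    fin_cases n
    · refine ⟨a * X 0, b * X 0, ?_⟩
      have e : p * X 0 - (T K (a * X 0) + T K (b * X 0) * X 2)
          = (p - (T K a + T K b * X 2)) * X 0 := by
        simp only [map_mul, T_X0]; ring
      show p * X 0 - (T K (a * X 0) + T K (b * X 0) * X 2) ∈ _
      rw [e]; exact Ideal.mul_mem_right _ _ h
    · refine ⟨a * X 1, b * X 1, ?_⟩
      have e : p * X 1 - (T K (a * X 1) + T K (b * X 1) * X 2)
          = (p - (T K a + T K b * X 2)) * X 1 := by
        simp only [map_mul, T_X1]; ring
      show p * X 1 - (T K (a * X 1) + T K (b * X 1) * X 2) ∈ _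
      rw [e]; exact Ideal.mul_mem_right _ _ h
    · refine ⟨-(b * X 0 * X 1), a, ?_⟩
      have e : p * X 2 - (T K (-(b * X 0 * X 1)) + T K a * X 2)
          = (p - (T K a + T K b * X 2)) * X 2 + T K b * (X 0 * X 1 + X 2 ^ 2) := by
        simp only [map_mul, map_neg, T_X0, T_X1]; ring
      show p * X 2 - (T K (-(b * X 0 * X 1)) + T K a * X 2) ∈ _
      rw [e]
      exact add_mem (Ideal.mul_mem_right _ _ h)
        (Ideal.mul_mem_left _ _ (Ideal.subset_span rfl))

lemma ψ_gen : ψ K (X 0 * X 1 + X 2 ^ 2) = 0 := by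
  rw [map_add, map_mul, map_pow, ψ_X0, ψ_X1, ψ_X2, pow_two, hUV2, ← map_mul]
  exact add_neg_cancel _

lemma ker_ψ {q : MvPolynomial (Fin 3) K} (h : ψ K q = 0) :
    q ∈ Ideal.span {(X 0 * X 1 + X 2 ^ 2 : MvPolynomial (Fin 3) K)} := by
  obtain ⟨a, b, hq⟩ := normal_form K q
  have hψI : ψ K (q - (T K a + T K b * X 2)) = 0 := by
    obtain ⟨c, hc⟩ := Ideal.mem_span_singleton'.mp hq
    rw [← hc, map_mul, ψ_gen, mul_zero]
  rw [map_sub, h, zero_sub, neg_eq_zero, map_add, map_mul, ψ_T, ψ_T, ψ_X2] at hψI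
  obtain ⟨ha, hb⟩ := extract K a b hψI
  rw [ha, hb] at hq
  simpa using hq

lemma φ_gen : φ K (X 0 * X 1 + X 2 ^ 2) = 0 := by
  rw [map_add, map_mul, map_pow, φ_X0, φ_X1, φ_X2]
  have h := mono_mul K 1 1 1 1
  norm_num at h
  rw [pow_two (NegQPlane.u K * NegQPlane.v K), h]
  module

lemma ker_φ {q : MvPolynomial (Fin 3) K} (h : φ K q = 0) :
    q ∈ Ideal.span {(X 0 * X 1 + X 2 ^ 2 : MvPolynomial (Fin 3) K)} := by
  apply ker_ψ
  rw [ψ, AlgHom.comp_apply, h, map_zero]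

end NQP


open MvPolynomial in
/-- Let `α` be the automorphism of `A = k_{-1}[u,v]` negating `u` and `v`. Then the
invariant ring `A^⟨α⟩` is generated (as a `k`-algebra) by `u²`, `v²` and `uv`, is
commutative, and is isomorphic to `k[x,y,z]/(xy + z²)`. -/
theorem negQPlane_invariants_of_negation {K : Type*} [Field K] [IsAlgClosed K] [CharZero K]
    (α : NegQPlane K ≃ₐ[K] NegQPlane K)
    (hαu : α (NegQPlane.u K) = -NegQPlane.u K) (hαv : α (NegQPlane.v K) = -NegQPlane.v K) :
    AlgHom.equalizer α.toAlgHom (AlgHom.id K (NegQPlane K)) =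
      Algebra.adjoin K
        {NegQPlane.u K ^ 2, NegQPlane.v K ^ 2, NegQPlane.u K * NegQPlane.v K} ∧
    (∀ x y : NegQPlane K, α x = x → α y = y → x * y = y * x) ∧
    Nonempty ((AlgHom.equalizer α.toAlgHom (AlgHom.id K (NegQPlane K))) ≃ₐ[K]
      (MvPolynomial (Fin 3) K ⧸
        Ideal.span {(X 0 * X 1 + X 2 ^ 2 : MvPolynomial (Fin 3) K)})) := by
  have heq := NQP.equalizer_eq K α hαu hαv
  refine ⟨heq, ?_, ?_⟩
  · intro x y hx hy
    have hx' : x ∈ AlgHom.equalizer α.toAlgHom (AlgHom.id K (NegQPlane K)) := hx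
    have hy' : y ∈ AlgHom.equalizer α.toAlgHom (AlgHom.id K (NegQPlane K)) := hy
    rw [heq] at hx' hy'
    exact NQP.comm_adjoin K hx' hy'
  · set I : Ideal (MvPolynomial (Fin 3) K) :=
      Ideal.span {(X 0 * X 1 + X 2 ^ 2 : MvPolynomial (Fin 3) K)} with hI
    have hker : ∀ q ∈ I, NQP.φ K q = 0 := by
      intro q hq
      obtain ⟨c, hc⟩ := Ideal.mem_span_singleton'.mp hq
      rw [← hc, map_mul, NQP.φ_gen, mul_zero]
    let φbar : (MvPolynomial (Fin 3) K ⧸ I) →ₐ[K] NegQPlane K :=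
      Ideal.Quotient.liftₐ I (NQP.φ K) hker
    have hφbar : ∀ q, φbar (Ideal.Quotient.mk I q) = NQP.φ K q := fun q => by
      simp [φbar]; rfl
    have hinj : Function.Injective φbar := by
      rw [injective_iff_map_eq_zero]
      intro qbar h0
      obtain ⟨q, rfl⟩ := Ideal.Quotient.mk_surjective qbar
      rw [hφbar] at h0
      exact (Ideal.Quotient.eq_zero_iff_mem).mpr (NQP.ker_φ K h0)
    have h1 : (NQP.φ K).range = Algebra.adjoin K
        {NegQPlane.u K ^ 2, NegQPlane.v K ^ 2, NegQPlane.u K * NegQPlane.v K} := by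
      apply le_antisymm
      · rintro _ ⟨q, rfl⟩
        exact (NQP.φb K q).2
      · apply Algebra.adjoin_le
        rintro y (rfl | rfl | rfl)
        exacts [⟨X 0, NQP.φ_X0 K⟩, ⟨X 1, NQP.φ_X1 K⟩, ⟨X 2, NQP.φ_X2 K⟩]
    have h2 : φbar.range = (NQP.φ K).range := by
      apply le_antisymm
      · rintro _ ⟨qbar, rfl⟩
        obtain ⟨q, rfl⟩ := Ideal.Quotient.mk_surjective qbar
        exact ⟨q, (hφbar q).symm⟩
      · rintro _ ⟨q, rfl⟩
        exact ⟨Ideal.Quotient.mk I q, hφbar q⟩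
    have h3 : AlgHom.equalizer α.toAlgHom (AlgHom.id K (NegQPlane K)) = φbar.range :=
      heq.trans (h1.symm.trans h2.symm)
    exact ⟨(Subalgebra.equivOfEq _ _ h3).trans (AlgEquiv.ofInjective φbar hinj).symm⟩
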